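/- Let α be a real number and let n be a positive integer. Then s(n,1,α) = n! · Σ_{k=0}^{n-1} (-1)^{n-k-1} · ((-α)_k / k!) / (n-k). -/

import Mathlib

/-- Non-central Stirling numbers of the first kind `s(n, k, α)`. -/
noncomputable def ncStirling : ℕ → ℕ → ℝ → ℝ
  | 0, 0, _ => 1
  | 0, _ + 1, _ => 0
  | n + 1, 0, α => (-α - n) * ncStirling n 0 α
  | n + 1, k + 1, α => ncStirling n k α + (-α - n) * ncStirling n (k + 1) α

/-- Falling factorial `(β)_i = β (β-1) ⋯ (β-i+1)`, with `(β)_0 = 1`. -/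
noncomputable def fall (β : ℝ) (i : ℕ) : ℝ := ∏ j ∈ Finset.range i, (β - j)

private noncomputable def ff (α : ℝ) (k : ℕ) : ℝ := fall (-α) k / k.factorial

private lemma ff_succ (α : ℝ) (k : ℕ) :
    ((k : ℝ) + 1) * ff α (k + 1) = (-α - k) * ff α k := by
  have hk : (k.factorial : ℝ) ≠ 0 := Nat.cast_ne_zero.2 k.factorial_ne_zero
  have hk1 : ((k : ℝ) + 1) ≠ 0 := by positivity
  unfold ff fall
  rw [Finset.prod_range_succ, Nat.factorial_succ]
  push_cast
  field_simp

private lemma ncStirling_zero (α : ℝ) (n : ℕ) : ncStirling n 0 α = fall (-α) n := by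
  induction n with
  | zero => simp [ncStirling, fall]
  | succ n ih =>
    rw [show ncStirling (n+1) 0 α = (-α - n) * ncStirling n 0 α from rfl, ih]
    unfold fall
    rw [Finset.prod_range_succ]
    ring

private lemma key (α : ℝ) (n : ℕ) :
    ((n : ℝ) + 1) * (∑ k ∈ Finset.range (n + 1), (-1 : ℝ)^k * ff α k / ((n : ℝ) + 1 - k))
      + (-α - n) * (∑ k ∈ Finset.range n, (-1 : ℝ)^k * ff α k / ((n : ℝ) - k))
    = (-1 : ℝ)^n * ff α n := by
  set h : ℕ → ℝ := fun j => (-1 : ℝ)^j * j * ff α j / ((n : ℝ) + 1 - j) with hh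
  have step : ∀ k ∈ Finset.range n,
      (-α - n) * ((-1 : ℝ)^k * ff α k / ((n : ℝ) - k))
        = -h (k + 1) - (-1 : ℝ)^k * ff α k := by
    intro k hk
    rw [Finset.mem_range] at hk
    have hnk : (n : ℝ) - k ≠ 0 := by
      have : (k : ℝ) < n := by exact_mod_cast hk
      linarith
    have hfs := ff_succ α k
    rw [hh]
    simp only
    push_cast
    rw [show ((n : ℝ) + 1 - (k + 1)) = (n : ℝ) - k from by ring]
    rw [show (-1:ℝ)^(k+1) * ((k:ℝ)+1) * ff α (k+1) / ((n : ℝ) - k)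
        = (-1:ℝ)^(k+1) * (((k:ℝ)+1) * ff α (k+1)) / ((n : ℝ) - k) from by ring,
      hfs, pow_succ]
    field_simp
    ring
  have hshift : ∑ k ∈ Finset.range n, h (k + 1) = ∑ k ∈ Finset.range (n + 1), h k := by
    rw [Finset.sum_range_succ' h n]
    simp [hh]
  have hsum : (-α - (n:ℝ)) * (∑ k ∈ Finset.range n, (-1 : ℝ)^k * ff α k / ((n : ℝ) - k))
      = -(∑ k ∈ Finset.range (n+1), h k)
        - ∑ k ∈ Finset.range n, (-1 : ℝ)^k * ff α k := by
    rw [Finset.mul_sum, Finset.sum_congr rfl step, Finset.sum_sub_distrib,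
      Finset.sum_neg_distrib, hshift]
  have term : ∀ k ∈ Finset.range (n + 1),
      ((n : ℝ) + 1) * ((-1 : ℝ)^k * ff α k / ((n : ℝ) + 1 - k)) - h k
        = (-1 : ℝ)^k * ff α k := by
    intro k hk
    rw [Finset.mem_range, Nat.lt_succ_iff] at hk
    have hnk : (n : ℝ) + 1 - k ≠ 0 := by
      have : (k : ℝ) ≤ n := by exact_mod_cast hk
      linarith
    rw [hh]
    simp only
    field_simp
  have h2 : ((n : ℝ) + 1) * (∑ k ∈ Finset.range (n + 1), (-1 : ℝ)^k * ff α k / ((n : ℝ) + 1 - k))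
      - ∑ k ∈ Finset.range (n+1), h k
      = ∑ k ∈ Finset.range (n + 1), (-1 : ℝ)^k * ff α k := by
    rw [Finset.mul_sum, ← Finset.sum_sub_distrib]
    exact Finset.sum_congr rfl term
  have h3 : ∑ k ∈ Finset.range (n + 1), (-1 : ℝ)^k * ff α k
      = (∑ k ∈ Finset.range n, (-1 : ℝ)^k * ff α k) + (-1 : ℝ)^n * ff α n :=
    Finset.sum_range_succ _ n
  rw [hsum]
  linarith [h2, h3]

private lemma main_aux (α : ℝ) (n : ℕ) (hn : 1 ≤ n) :
    ncStirling n 1 α = (-1 : ℝ)^(n - 1) * n.factorial *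
      ∑ k ∈ Finset.range n, (-1 : ℝ)^k * ff α k / ((n : ℝ) - k) := by
  induction n, hn using Nat.le_induction with
  | base =>
    have h1 : ncStirling 1 1 α = 1 := by simp [ncStirling]
    rw [h1]
    simp [ff, fall]
  | succ n hn ih =>
    show ncStirling n 0 α + (-α - (n : ℝ)) * ncStirling n 1 α = _
    rw [ncStirling_zero, ih]
    have hkey := key α n
    have hfall : fall (-α) n = (n.factorial : ℝ) * ff α n := by
      have : (n.factorial : ℝ) ≠ 0 := Nat.cast_ne_zero.2 n.factorial_ne_zero
      unfold ff
      field_simp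
    have hpow : (-1 : ℝ)^(n - 1) = -(-1 : ℝ)^n := by
      conv_rhs => rw [show n = (n - 1) + 1 from by omega]
      rw [pow_succ]
      ring
    have hsq : ((-1 : ℝ)^n) * ((-1 : ℝ)^n) = 1 := by
      rw [← pow_add]
      exact Even.neg_one_pow ⟨n, rfl⟩
    have hfac : ((n + 1).factorial : ℝ) = ((n : ℝ) + 1) * n.factorial := by
      rw [Nat.factorial_succ]; push_cast; ring
    rw [show ((n : ℕ) + 1 - 1) = n from rfl, hfac, hfall, hpow]
    push_cast
    linear_combination (-(-1 : ℝ)^n * (n.factorial : ℝ)) * hkey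
      + (-(n.factorial : ℝ) * ff α n) * hsq

theorem ncStirling_one_formula (α : ℝ) (n : ℕ) (hn : 0 < n) :
    ncStirling n 1 α = (n.factorial : ℝ) * ∑ k ∈ Finset.range n,
      (-1 : ℝ) ^ (n - k - 1) * (fall (-α) k / k.factorial) / ((n : ℝ) - k) := by
  rw [main_aux α n hn]
  rw [Finset.mul_sum, Finset.mul_sum]
  apply Finset.sum_congr rfl
  intro k hk
  rw [Finset.mem_range] at hk
  have hpow : (-1 : ℝ)^(n - k - 1) = (-1 : ℝ)^(n - 1) * (-1 : ℝ)^k := by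
    have h1 : n - k - 1 + k = n - 1 := by omega
    have h2 : ((-1 : ℝ)^k) * ((-1 : ℝ)^k) = 1 := by
      rw [← pow_add]
      exact Even.neg_one_pow ⟨k, rfl⟩
    calc (-1 : ℝ)^(n - k - 1) = (-1 : ℝ)^(n - k - 1) * (((-1:ℝ)^k) * ((-1:ℝ)^k)) := by
          rw [h2]; ring
      _ = ((-1 : ℝ)^(n - k - 1 + k)) * (-1:ℝ)^k := by rw [pow_add]; ring
      _ = (-1 : ℝ)^(n - 1) * (-1 : ℝ)^k := by rw [h1]
  rw [hpow, ff]
  ring
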